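/- The non-unital star-subalgebra of C₀(ℝ, ℂ) (continuous complex-valued functions on ℝ vanishing at infinity, with the supremum norm) generated by the function t ↦ (t + i)⁻¹ is dense in C₀(ℝ, ℂ). Equivalently, the closed subalgebra of C₀(ℝ, ℂ) generated by the two functions t ↦ (t + i)⁻¹ and t ↦ (t − i)⁻¹ is all of C₀(ℝ, ℂ). -/

import Mathlib

open scoped ZeroAtInfty ContinuousMapZero
open Filter Topology

/-- The function `t ↦ (t + i)⁻¹` as an element of `C₀(ℝ, ℂ)`. -/
noncomputable def resolventPlus : C₀(ℝ, ℂ) where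
  toFun t := ((t : ℂ) + Complex.I)⁻¹
  continuous_toFun := by
    refine (Complex.continuous_ofReal.add continuous_const).inv₀ fun t ht => ?_
    have := congrArg Complex.im ht
    simp at this
  zero_at_infty' := by
    rw [tendsto_zero_iff_norm_tendsto_zero]
    have h1 : Filter.Tendsto (fun t : ℝ => ‖(t : ℂ) + Complex.I‖)
        (Filter.cocompact ℝ) Filter.atTop := by
      refine Filter.tendsto_atTop_mono (fun t => ?_)
        (Filter.tendsto_atTop_add_const_right _ (-1) tendsto_norm_cocompact_atTop)
      have h := norm_sub_norm_le ((t : ℂ)) (-Complex.I)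
      simpa [sub_neg_eq_add] using h
    have h2 : Filter.Tendsto (fun t : ℝ => ‖(t : ℂ) + Complex.I‖⁻¹) (Filter.cocompact ℝ)
        (nhds 0) := h1.inv_tendsto_atTop
    simpa [norm_inv, Pi.inv_def] using h2

namespace ResolventAux

noncomputable def S : Set ℂ := Metric.sphere (-(Complex.I/2)) (1/2)

lemma zero_mem_S : (0:ℂ) ∈ S := by
  simp only [S, Metric.mem_sphere, dist_eq_norm, zero_sub, norm_neg, neg_neg]
  simp [Complex.norm_I]

noncomputable instance : Zero S := ⟨⟨0, zero_mem_S⟩⟩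

instance : Fact ((0:ℂ) ∈ S) := ⟨zero_mem_S⟩

lemma coe_zero_S : ((0 : S) : ℂ) = 0 := rfl

instance : CompactSpace S := isCompact_iff_compactSpace.mp (isCompact_sphere _ _)

lemma add_I_ne_zero (t : ℝ) : (t:ℂ) + Complex.I ≠ 0 := fun h => by
  have := congrArg Complex.im h; simp at this

lemma mem_S (t : ℝ) : ((t:ℂ) + Complex.I)⁻¹ ∈ S := by
  have h1 : Complex.normSq ((t:ℂ) + Complex.I) = t^2 + 1 := by
    simp [Complex.normSq_apply]; ring
  have h2 : (t:ℝ)^2 + 1 ≠ 0 := by positivity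
  simp only [S, Metric.mem_sphere, dist_eq_norm, sub_neg_eq_add]
  rw [Complex.norm_def, Complex.normSq_apply]
  have hre : (((t:ℂ) + Complex.I)⁻¹ + Complex.I/2).re = t / (t^2+1) := by
    simp [Complex.add_re, Complex.inv_re, h1]
  have him : (((t:ℂ) + Complex.I)⁻¹ + Complex.I/2).im = -1/(t^2+1) + 1/2 := by
    simp [Complex.add_im, Complex.inv_im, h1]
  rw [hre, him]
  rw [show t / (t^2+1) * (t / (t^2+1)) + (-1/(t^2+1) + 1/2) * (-1/(t^2+1) + 1/2)
      = (1/2:ℝ)^2 by field_simp; ring]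
  exact Real.sqrt_sq (by norm_num)

lemma im_eq {w : ℂ} (hw : w ∈ S) : w.im = -Complex.normSq w := by
  have h1 : ‖w + Complex.I/2‖ = 1/2 := by
    simpa [S, Metric.mem_sphere, dist_eq_norm, sub_neg_eq_add] using hw
  have h2 : Complex.normSq (w + Complex.I/2) = 1/4 := by
    have := congrArg (fun x : ℝ => x^2) h1
    rw [Complex.sq_norm] at this
    rw [this]; norm_num
  simp only [Complex.normSq_apply, Complex.add_re, Complex.add_im] at h2 ⊢
  have hre : (Complex.I/2).re = 0 := by simp
  have him : (Complex.I/2).im = 1/2 := by simp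
  rw [hre, him] at h2
  nlinarith [h2]

noncomputable def ψ (z : ℂ) : ℝ := (z⁻¹).re

lemma inv_eq {w : ℂ} (hw : w ∈ S) (hw0 : w ≠ 0) : w⁻¹ = (ψ w : ℂ) + Complex.I := by
  have hn : Complex.normSq w ≠ 0 := by
    simpa [Complex.normSq_eq_zero] using hw0
  apply Complex.ext
  · simp [ψ]
  · simp only [Complex.add_im, Complex.ofReal_im, Complex.I_im, zero_add]
    rw [Complex.inv_im, im_eq hw]
    field_simp

lemma abs_psi_ge {w : ℂ} (hw : w ∈ S) (hw0 : w ≠ 0) : ‖w‖⁻¹ - 1 ≤ |ψ w| := by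
  have h := inv_eq hw hw0
  have : ‖w⁻¹‖ ≤ |ψ w| + 1 := by
    rw [h]
    calc ‖(ψ w : ℂ) + Complex.I‖ ≤ ‖(ψ w : ℂ)‖ + ‖Complex.I‖ := norm_add_le _ _
    _ = |ψ w| + 1 := by simp [Complex.norm_real]
  rw [norm_inv] at this
  linarith

/-- The map `t ↦ (t+i)⁻¹` as a continuous map `ℝ → S`. -/
noncomputable def φ : C(ℝ, S) where
  toFun t := ⟨((t:ℂ) + Complex.I)⁻¹, mem_S t⟩
  continuous_toFun := by
    apply Continuous.subtype_mk
    exact (Complex.continuous_ofReal.add continuous_const).inv₀ add_I_ne_zero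

lemma tendsto_φ : Tendsto φ (cocompact ℝ) (𝓝 (0 : S)) := by
  rw [show (0 : S) = (⟨0, zero_mem_S⟩ : S) from rfl, tendsto_subtype_rng]
  exact resolventPlus.zero_at_infty'

/-- Composition with `φ` as a map `C(S, ℂ)₀ → C₀(ℝ, ℂ)`. -/
noncomputable def compφ (f : C(S, ℂ)₀) : C₀(ℝ, ℂ) where
  toFun t := f (φ t)
  continuous_toFun := (map_continuous f).comp (map_continuous φ)
  zero_at_infty' := by
    have : Tendsto f (𝓝 (0 : S)) (𝓝 0) := by
      have := (map_continuous f).tendsto (0 : S)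
      rwa [map_zero f] at this
    exact this.comp tendsto_φ

lemma norm_compφ_le (f : C(S, ℂ)₀) : ‖compφ f‖ ≤ ‖f‖ := by
  rw [← ZeroAtInftyContinuousMap.norm_toBCF_eq_norm]
  apply BoundedContinuousFunction.norm_le (norm_nonneg f) |>.mpr
  intro t
  rw [ContinuousMapZero.norm_def]
  exact ContinuousMap.norm_coe_le_norm (f : C(S, ℂ)) (φ t)

/-- Composition with `φ` as a non-unital star algebra homomorphism. -/
noncomputable def Φ : C(S, ℂ)₀ →⋆ₙₐ[ℂ] C₀(ℝ, ℂ) where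
  toFun := compφ
  map_add' f g := rfl
  map_mul' f g := rfl
  map_zero' := rfl
  map_smul' c f := rfl
  map_star' f := rfl

lemma continuous_Φ : Continuous Φ := by
  have : LipschitzWith 1 Φ := by
    apply LipschitzWith.of_dist_le_mul
    intro f g
    rw [dist_eq_norm, dist_eq_norm, ← map_sub Φ]
    have h := norm_compφ_le (f - g)
    simp only [NNReal.coe_one, one_mul]
    exact h
  exact this.continuous

lemma Φ_id : Φ (ContinuousMapZero.id S) = resolventPlus := by
  ext t
  rfl

lemma Φ_surjective : Function.Surjective Φ := by
  intro g
  have hcont : ContinuousOn (fun z : ℂ => if z = 0 then 0 else g (ψ z)) S := by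
    intro z hz
    by_cases hz0 : z = 0
    · subst hz0
      rw [ContinuousWithinAt, if_pos rfl]
      have hsub : S ⊆ (S \ {0}) ∪ {0} := by
        intro w hw
        by_cases h : w = (0:ℂ)
        · exact Or.inr h
        · exact Or.inl ⟨hw, h⟩
      apply Tendsto.mono_left _ (nhdsWithin_mono _ hsub)
      rw [nhdsWithin_union, tendsto_sup]
      constructor
      · -- on S \ {0} : equals g ∘ ψ, tendsto via cocompact
        have hψ : Tendsto ψ (𝓝[S \ {0}] 0) (cocompact ℝ) := by
          rw [← Metric.cobounded_eq_cocompact, ← comap_norm_atTop, tendsto_comap_iff]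
          have hnorm : Tendsto (fun w : ℂ => ‖w‖⁻¹ - 1) (𝓝[S \ {0}] 0) atTop := by
            apply Filter.tendsto_atTop_add_const_right _ (-1)
            apply Tendsto.comp tendsto_inv_nhdsGT_zero
            rw [tendsto_nhdsWithin_iff]
            constructor
            · simpa using (continuous_norm.tendsto (0:ℂ)).mono_left nhdsWithin_le_nhds
            · filter_upwards [self_mem_nhdsWithin] with w hw
              exact Set.mem_Ioi.mpr (norm_pos_iff.mpr hw.2)
          apply tendsto_atTop_mono' _ _ hnorm
          filter_upwards [self_mem_nhdsWithin] with w hw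
          simpa using abs_psi_ge hw.1 hw.2
        have := g.zero_at_infty'.comp hψ
        apply this.congr'
        filter_upwards [self_mem_nhdsWithin] with w hw
        have hw2 : w ≠ 0 := hw.2
        rw [if_neg hw2]
        rfl
      · -- on {0}
        rw [nhdsWithin_singleton, tendsto_pure_left]
        intro s hs
        simpa using mem_of_mem_nhds hs
    · have hev : ∀ᶠ w in 𝓝[S] z, (if w = 0 then 0 else g (ψ w)) = g (ψ w) := by
        have : {w : ℂ | w ≠ 0} ∈ 𝓝[S] z :=
          nhdsWithin_le_nhds (isOpen_ne.mem_nhds hz0)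
        filter_upwards [this] with w hw
        rw [if_neg hw]
      have hc : ContinuousWithinAt (fun w => g (ψ w)) S z := by
        apply ContinuousAt.continuousWithinAt
        apply (map_continuous g).continuousAt.comp
        apply ContinuousAt.comp Complex.continuous_re.continuousAt
        exact continuousAt_inv₀ hz0
      exact hc.congr_of_eventuallyEq hev (by rw [if_neg hz0])
  refine ⟨⟨⟨S.domRestrict (fun z => if z = 0 then 0 else g (ψ z)),
    hcont.restrict⟩, by simp [coe_zero_S]⟩, ?_⟩
  ext t
  show (if (((t:ℂ) + Complex.I)⁻¹ : ℂ) = 0 then 0 else g (ψ ((t:ℂ) + Complex.I)⁻¹)) = g t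
  rw [if_neg (inv_ne_zero (add_I_ne_zero t))]
  congr 1
  simp [ψ, inv_inv, add_I_ne_zero t]

end ResolventAux

open ResolventAux

theorem dense_adjoin_resolventPlus :
    Dense ((NonUnitalStarAlgebra.adjoin ℂ {resolventPlus} :
      NonUnitalStarSubalgebra ℂ C₀(ℝ, ℂ)) : Set C₀(ℝ, ℂ)) := by
  have hdense : Dense ((NonUnitalStarAlgebra.adjoin ℂ
      {(ContinuousMapZero.id S : C(S, ℂ)₀)} :
      NonUnitalStarSubalgebra ℂ C(S, ℂ)₀) : Set C(S, ℂ)₀) :=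
    ContinuousMapZero.adjoin_id_dense S
  have key : (Φ '' (NonUnitalStarAlgebra.adjoin ℂ
      {(ContinuousMapZero.id S : C(S, ℂ)₀)} :
      NonUnitalStarSubalgebra ℂ C(S, ℂ)₀)) =
      ((NonUnitalStarAlgebra.adjoin ℂ {resolventPlus} :
      NonUnitalStarSubalgebra ℂ C₀(ℝ, ℂ)) : Set C₀(ℝ, ℂ)) := by
    rw [← NonUnitalStarSubalgebra.coe_map, NonUnitalStarAlgHom.map_adjoin_singleton, Φ_id]
  rw [← key]
  exact (Φ_surjective.denseRange).dense_image continuous_Φ hdense
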